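/- Under the additional assumption a < (1-δ₁)(1 - 1/q)γ for some δ₁ > 0, if G(0) > γ then there exists δ₂ > 0 depending only on δ₁ (and q) such that G(t) > (1+δ₂)γ for all t ∈ I. -/

import Mathlib

lemma rpow_le_one_add_mul_aux {s q : ℝ} (hs : 1 ≤ s) (hq : 1 < q) :
    s ^ q ≤ 1 + q * s ^ (q - 1) * (s - 1) := by
  have hs0 : 0 < s := by linarith
  have hz : -1 ≤ s⁻¹ - 1 := by
    have : 0 < s⁻¹ := inv_pos.mpr hs0
    linarith
  have hB := one_add_mul_self_le_rpow_one_add hz (le_of_lt hq)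
  rw [show 1 + (s⁻¹ - 1) = s⁻¹ by ring, Real.inv_rpow hs0.le] at hB
  have hpow : s ^ (q - 1) = s ^ q * s⁻¹ := by
    rw [Real.rpow_sub hs0, Real.rpow_one, div_eq_mul_inv]
  have hq0 : 0 < s ^ q := Real.rpow_pos_of_pos hs0 q
  have hmul : (1 + q * (s⁻¹ - 1)) * s ^ q ≤ (s ^ q)⁻¹ * s ^ q :=
    mul_le_mul_of_nonneg_right hB hq0.le
  rw [inv_mul_cancel₀ hq0.ne'] at hmul
  have hmul' : s ^ q + q * s ^ (q - 1) - q * s ^ q ≤ 1 := by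
    have he : (1 + q * (s⁻¹ - 1)) * s ^ q = s ^ q + q * (s ^ q * s⁻¹) - q * s ^ q := by ring
    rw [he, ← hpow] at hmul
    linarith
  have h5 : s ^ (q - 1) * s = s ^ q := by
    rw [hpow, mul_assoc, inv_mul_cancel₀ hs0.ne', mul_one]
  calc s ^ q ≤ 1 + q * s ^ q - q * s ^ (q - 1) := by linarith
    _ = 1 + q * (s ^ (q - 1) * s) - q * s ^ (q - 1) := by rw [h5]
    _ = 1 + q * s ^ (q - 1) * (s - 1) := by ring

/-- quantitative trapping: if a < (1-δ₁)(1-1/q)γ and G(0) > γ, then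
G(t) > (1+δ₂)γ on I, where δ₂ > 0 depends only on δ₁ (and q). -/
theorem trapping_lemma_quantitative (q δ₁ : ℝ) (hq : 1 < q) (hδ₁ : 0 < δ₁) :
    ∃ δ₂ : ℝ, 0 < δ₂ ∧
      ∀ (I : Set ℝ) (p r a b γ : ℝ) (G : ℝ → ℝ),
        I = Set.Ioo p r → (0 : ℝ) ∈ I → 0 < b →
        γ = (b * q) ^ (-(1 / (q - 1))) →
        ContinuousOn G I → (∀ t ∈ I, 0 ≤ G t) →
        (∀ t ∈ I, 0 ≤ a - G t + b * (G t) ^ q) →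
        a < (1 - δ₁) * ((1 - 1/q) * γ) → G 0 > γ →
        ∀ t ∈ I, G t > (1 + δ₂) * γ := by
  have hq0 : (0:ℝ) < q := by linarith
  have hc : (0:ℝ) < 1 - 1/q := by
    have : 1/q < 1 := by rw [div_lt_one hq0]; exact hq
    linarith
  have h2 : (1:ℝ) < (2:ℝ) ^ (q - 1) := by
    exact (Real.one_lt_rpow_iff_of_pos (by norm_num)).mpr (Or.inl ⟨by norm_num, by linarith⟩)
  set δ₂ := min 1 (δ₁ * (1 - 1/q) / ((2:ℝ) ^ (q - 1) - 1)) with hδ₂def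
  have hδ₂pos : 0 < δ₂ := lt_min one_pos (div_pos (mul_pos hδ₁ hc) (by linarith))
  have hδ₂one : δ₂ ≤ 1 := min_le_left _ _
  have hδ₂le : δ₂ * ((2:ℝ) ^ (q - 1) - 1) ≤ δ₁ * (1 - 1/q) := by
    have := min_le_right 1 (δ₁ * (1 - 1/q) / ((2:ℝ) ^ (q - 1) - 1))
    rw [le_div_iff₀ (by linarith)] at this
    exact this
  refine ⟨δ₂, hδ₂pos, ?_⟩
  intro I p r a b γ G hI h0I hb hγ hGc hGnn hf ha hG0
  subst hI
  have hbq0 : (0:ℝ) < b * q := mul_pos hb hq0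
  have hγ0 : 0 < γ := hγ ▸ Real.rpow_pos_of_pos hbq0 _
  have hγq1 : γ ^ (q - 1) = (b * q)⁻¹ := by
    rw [hγ, ← Real.rpow_mul hbq0.le]
    have hne : q - 1 ≠ 0 := by linarith
    rw [show -(1 / (q - 1)) * (q - 1) = -1 by field_simp]
    exact Real.rpow_neg_one _
  have hbγq : b * γ ^ q = γ / q := by
    have h1 : γ ^ q = γ * γ ^ (q - 1) := by
      nth_rewrite 2 [show γ = γ ^ (1:ℝ) from (Real.rpow_one γ).symm]
      rw [← Real.rpow_add hγ0]
      ring_nf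
    rw [h1, hγq1]
    field_simp
  have key : ∀ s : ℝ, 1 ≤ s → s ≤ 1 + δ₂ → a - s * γ + b * (s * γ) ^ q < 0 := by
    intro s hs1 hs2
    have hs0 : (0:ℝ) ≤ s := by linarith
    have hmulpow : (s * γ) ^ q = s ^ q * γ ^ q := Real.mul_rpow hs0 hγ0.le
    have hber := rpow_le_one_add_mul_aux hs1 hq
    have hpowle : s ^ (q - 1) ≤ (2:ℝ) ^ (q - 1) :=
      Real.rpow_le_rpow (by linarith) (by linarith) (by linarith)
    have hpow1 : (1:ℝ) ≤ s ^ (q - 1) := by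
      calc (1:ℝ) = 1 ^ (q - 1) := (Real.one_rpow _).symm
        _ ≤ s ^ (q - 1) := Real.rpow_le_rpow (by norm_num) hs1 (by linarith)
    have h3 : (s ^ (q - 1) - 1) * (s - 1) ≤ ((2:ℝ) ^ (q - 1) - 1) * δ₂ :=
      mul_le_mul (by linarith) (by linarith) (by linarith) (by linarith)
    have h4 : (s ^ q - 1) / q ≤ s ^ (q - 1) * (s - 1) := by
      rw [div_le_iff₀ hq0]
      nlinarith [hber]
    have hg : (1 - 1/q) - (s - s ^ q / q) ≤ δ₁ * (1 - 1/q) := by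
      have hx : (s ^ q - 1) / q = s ^ q / q - 1 / q := by ring
      nlinarith [h4, h3, hδ₂le]
    have hglb : (1 - δ₁) * (1 - 1/q) ≤ s - s ^ q / q := by nlinarith
    have hlt : a < γ * (s - s ^ q / q) := by
      calc a < (1 - δ₁) * ((1 - 1/q) * γ) := ha
        _ = ((1 - δ₁) * (1 - 1/q)) * γ := by ring
        _ ≤ (s - s ^ q / q) * γ := mul_le_mul_of_nonneg_right hglb hγ0.le
        _ = γ * (s - s ^ q / q) := by ring
    have hbsγ : b * (s ^ q * γ ^ q) = s ^ q * (γ / q) := by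
      rw [show b * (s ^ q * γ ^ q) = s ^ q * (b * γ ^ q) by ring, hbγq]
    rw [hmulpow, hbsγ]
    have he2 : γ * (s - s ^ q / q) = γ * s - s ^ q * (γ / q) := by ring
    rw [he2] at hlt
    linarith
  have avoid : ∀ t ∈ Set.Ioo p r, ¬ (γ ≤ G t ∧ G t ≤ (1 + δ₂) * γ) := by
    rintro t ht ⟨h1, h2⟩
    have hs1 : 1 ≤ G t / γ := (le_div_iff₀ hγ0).mpr (by linarith)
    have hs2 : G t / γ ≤ 1 + δ₂ := (div_le_iff₀ hγ0).mpr h2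
    have heq : (G t / γ) * γ = G t := div_mul_cancel₀ _ hγ0.ne'
    have hk := key (G t / γ) hs1 hs2
    rw [heq] at hk
    linarith [hf t ht]
  have hG0' : G 0 > (1 + δ₂) * γ := by
    by_contra h
    push_neg at h
    exact avoid 0 h0I ⟨hG0.le, h⟩
  intro t ht
  by_contra hcon
  push_neg at hcon
  have hGt : G t < γ := by
    by_contra h
    push_neg at h
    exact avoid t ht ⟨h, hcon⟩
  have hsub : Set.uIcc (0:ℝ) t ⊆ Set.Ioo p r :=
    Set.ordConnected_Ioo.uIcc_subset h0I ht
  have hIVT := intermediate_value_uIcc (hGc.mono hsub)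
  have hγmem : γ ∈ Set.uIcc (G 0) (G t) := by
    rw [Set.mem_uIcc]
    right
    exact ⟨hGt.le, hG0.le⟩
  obtain ⟨c, hc_mem, hc_eq⟩ := hIVT hγmem
  exact avoid c (hsub hc_mem) ⟨hc_eq.ge, by nlinarith [hδ₂pos, hγ0]⟩
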